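/- In Ãₙ, the intersection of the parabolic subgroup ⟨a₁,…,aₙ⟩ with N = ⟨pⱼ⁻¹pᵢ⟩ is trivial. -/

import Mathlib

open CoxeterMatrix

/-- The affine Coxeter matrix of type Ãₙ on the cyclic index set `ZMod (n+1)`:
`aᵢ² = 1`, `(aᵢa_{i+1})³ = 1`, and non-adjacent generators (mod n+1) commute. -/
def affineA (n : ℕ) : CoxeterMatrix (ZMod (n + 1)) where
  M := fun i j => if i = j then 1 else if i = j + 1 ∨ j = i + 1 then 3 else 2
  isSymm := by
    ext i j
    by_cases h : i = j
    · subst h; rfl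
    · show (if j = i then (1 : ℕ) else if j = i + 1 ∨ i = j + 1 then 3 else 2) =
        (if i = j then (1 : ℕ) else if i = j + 1 ∨ j = i + 1 then 3 else 2)
      rw [if_neg h, if_neg (Ne.symm h)]
      exact if_congr or_comm rfl rfl
  diagonal := fun i => by simp
  off_diagonal := fun i j h => by
    simp only [if_neg h]
    split <;> simp

/-- The Coxeter generators `aᵢ` of `Ãₙ`. -/
def aa (n : ℕ) (i : ZMod (n + 1)) : (affineA n).Group := (affineA n).simple i

/-- The cyclic products `pⱼ = a_{j+1} a_{j+2} ⋯ a_{j-1}` (indices mod `n+1`). -/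
def pp (n : ℕ) (j : ZMod (n + 1)) : (affineA n).Group :=
  ((List.range n).map fun k => aa n (j + 1 + (k : ℕ))).prod

/-- `gⱼ = pⱼ⁻¹ p_{j+1}`. -/
def gg (n : ℕ) (j : ZMod (n + 1)) : (affineA n).Group := (pp n j)⁻¹ * pp n (j + 1)

/-- The subgroup `N = ⟨pⱼ⁻¹pᵢ : i, j⟩` of `Ãₙ`. -/
def NN (n : ℕ) : Subgroup (affineA n).Group :=
  Subgroup.closure {x | ∃ i j : ZMod (n + 1), x = (pp n j)⁻¹ * pp n i}

/-- The standard parabolic subgroup `⟨a₁,…,aₙ⟩` of `Ãₙ` (all generators except `a_{n+1} = a₀`). -/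
def parab (n : ℕ) : Subgroup (affineA n).Group :=
  Subgroup.closure {x | ∃ i : ZMod (n + 1), i ≠ 0 ∧ x = aa n i}

namespace Stmt15

variable {n : ℕ}

/-- The Coxeter system of the presented group. -/
noncomputable def cs (n : ℕ) : CoxeterSystem (affineA n) (affineA n).Group :=
  (affineA n).toCoxeterSystem

lemma cs_simple (i : ZMod (n+1)) : (cs n).simple i = aa n i := by
  rw [cs, CoxeterMatrix.toCoxeterSystem_simple]; rfl

lemma M_apply (i j : ZMod (n+1)) :
    (affineA n) i j = if i = j then 1 else if i = j + 1 ∨ j = i + 1 then 3 else 2 := rfl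

lemma aa_mul_self (i : ZMod (n+1)) : aa n i * aa n i = 1 := by
  rw [← cs_simple]; exact (cs n).simple_mul_simple_self i

lemma aa_inv (i : ZMod (n+1)) : (aa n i)⁻¹ = aa n i :=
  inv_eq_of_mul_eq_one_right (aa_mul_self i)

lemma aa_pow (i j : ZMod (n+1)) : (aa n i * aa n j) ^ (affineA n) i j = 1 := by
  rw [← cs_simple, ← cs_simple]; exact (cs n).simple_mul_simple_pow i j

lemma comm_of {i j : ZMod (n+1)} (h1 : i ≠ j) (h2 : i ≠ j + 1) (h3 : j ≠ i + 1) :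
    Commute (aa n i) (aa n j) := by
  have h := aa_pow i j
  rw [M_apply, if_neg h1, if_neg (by push_neg; exact ⟨h2, h3⟩)] at h
  have h' : (aa n i * aa n j) * (aa n i * aa n j) = 1 := by
    rw [← sq]; exact h
  have : aa n i * aa n j = (aa n i * aa n j)⁻¹ := eq_inv_of_mul_eq_one_right h'
  rw [mul_inv_rev, aa_inv, aa_inv] at this
  exact this

lemma braid_of {i j : ZMod (n+1)} (h1 : i ≠ j) (h2 : i = j + 1) :
    aa n i * aa n j * aa n i = aa n j * aa n i * aa n j := by
  have h := aa_pow i j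
  rw [M_apply, if_neg h1, if_pos (Or.inl h2)] at h
  have h' : (aa n i * aa n j * aa n i) * (aa n j * aa n i * aa n j) = 1 := by
    rw [show (aa n i * aa n j * aa n i) * (aa n j * aa n i * aa n j) = (aa n i * aa n j) ^ 3 from by
      simp only [pow_succ, pow_zero, one_mul, mul_assoc]]
    exact h
  rw [eq_inv_of_mul_eq_one_left h']
  simp only [mul_inv_rev, aa_inv, mul_assoc]

/-! ### Nat-indexed generators -/

lemma castne {a b : ℕ} (ha : a < n+1) (hb : b < n+1) (h : a ≠ b) :
    (a : ZMod (n+1)) ≠ (b : ZMod (n+1)) := by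
  intro hc
  apply h
  have := congrArg ZMod.val hc
  rwa [ZMod.val_cast_of_lt ha, ZMod.val_cast_of_lt hb] at this

/-- `ag k = a_k` with natural index. -/
def ag (n k : ℕ) : (affineA n).Group := aa n (k : ZMod (n+1))

lemma cast_pred {i : ℕ} (hi : 1 ≤ i) : ((i - 1 : ℕ) : ZMod (n+1)) = (i : ZMod (n+1)) - 1 := by
  have : ((i - 1 : ℕ) : ZMod (n+1)) + 1 = (i : ZMod (n+1)) := by
    rw [show (1 : ZMod (n+1)) = ((1:ℕ) : ZMod (n+1)) from by push_cast; ring, ← Nat.cast_add]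
    congr 1
    omega
  exact eq_sub_of_add_eq this

lemma cast_ne_zero {a : ℕ} (h1 : 1 ≤ a) (h2 : a ≤ n) : (a : ZMod (n+1)) ≠ 0 := by
  have := castne (n := n) (a := a) (b := 0) (by omega) (by omega) (by omega)
  simpa using this

lemma comm_ag {a b : ℕ} (h1 : 1 ≤ a) (h2 : a + 2 ≤ b) (h3 : b ≤ n) :
    Commute (ag n a) (ag n b) := by
  apply comm_of
  · exact castne (by omega) (by omega) (by omega)
  · rcases Nat.lt_or_ge (b+1) (n+1) with hb | hb
    · rw [show ((b : ZMod (n+1)) + 1) = ((b+1 : ℕ) : ZMod (n+1)) from by push_cast; ring]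
      exact castne (by omega) hb (by omega)
    · have hbn : b = n := by omega
      rw [hbn]
      rw [show ((n : ZMod (n+1)) + 1) = ((n+1 : ℕ) : ZMod (n+1)) from by push_cast; ring,
        ZMod.natCast_self]
      exact cast_ne_zero h1 (by omega)
  · rw [show ((a : ZMod (n+1)) + 1) = ((a+1 : ℕ) : ZMod (n+1)) from by push_cast; ring]
    exact castne (by omega) (by omega) (by omega)

lemma braid_ag {i : ℕ} (h1 : 1 ≤ i) (h2 : i ≤ n) :
    ag n i * ag n (i-1) * ag n i = ag n (i-1) * ag n i * ag n (i-1) := by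
  apply braid_of
  · exact castne (by omega) (by omega) (by omega)
  · rw [cast_pred h1]
    ring

lemma ag_mul_self (k : ℕ) : ag n k * ag n k = 1 := aa_mul_self _

/-! ### The permutation representation -/

section Perm
open Equiv

lemma swap_commute {α : Type*} [DecidableEq α] {a b c d : α}
    (h1 : a ≠ c) (h2 : a ≠ d) (h3 : b ≠ c) (h4 : b ≠ d) :
    Commute (Equiv.swap a b) (Equiv.swap c d) := by
  apply Equiv.ext
  intro x
  simp only [Equiv.Perm.mul_apply, Equiv.swap_apply_def]
  split_ifs <;> simp_all

lemma three_cycle_aux {α : Type*} [DecidableEq α] {a b c : α}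
    (h1 : a ≠ b) (h2 : b ≠ c) (h3 : a ≠ c) :
    (Equiv.swap b c * Equiv.swap a b) ^ 3 = 1 := by
  set g := Equiv.swap b c * Equiv.swap a b with hg
  have ga : g a = c := by
    simp [hg, Equiv.Perm.mul_apply, Equiv.swap_apply_left]
  have gb : g b = a := by
    simp [hg, Equiv.Perm.mul_apply, Equiv.swap_apply_right,
      Equiv.swap_apply_of_ne_of_ne h1 h3]
  have gc : g c = b := by
    simp [hg, Equiv.Perm.mul_apply,
      Equiv.swap_apply_of_ne_of_ne (Ne.symm h3) (Ne.symm h2), Equiv.swap_apply_right]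
  have gother : ∀ x, x ≠ a → x ≠ b → x ≠ c → g x = x := by
    intro x hxa hxb hxc
    simp [hg, Equiv.Perm.mul_apply, Equiv.swap_apply_of_ne_of_ne hxa hxb,
      Equiv.swap_apply_of_ne_of_ne hxb hxc]
  apply Equiv.ext
  intro x
  have hpow : (g ^ 3) x = g (g (g x)) := by
    rw [pow_succ, pow_succ, pow_one]
    simp [Equiv.Perm.mul_apply]
  rw [hpow]
  by_cases hxa : x = a
  · subst hxa; rw [ga, gc, gb]; rfl
  by_cases hxb : x = b
  · subst hxb; rw [gb, ga, gc]; rfl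
  by_cases hxc : x = c
  · subst hxc; rw [gc, gb, ga]; rfl
  · rw [gother x hxa hxb hxc, gother x hxa hxb hxc, gother x hxa hxb hxc]; rfl

lemma three_cycle_aux' {α : Type*} [DecidableEq α] {a b c : α}
    (h1 : a ≠ b) (h2 : b ≠ c) (h3 : a ≠ c) :
    (Equiv.swap a b * Equiv.swap b c) ^ 3 = 1 := by
  have h := three_cycle_aux h1 h2 h3
  have hinv : (Equiv.swap b c * Equiv.swap a b)⁻¹ = Equiv.swap a b * Equiv.swap b c := by
    rw [mul_inv_rev, Equiv.swap_inv, Equiv.swap_inv]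
  calc (Equiv.swap a b * Equiv.swap b c) ^ 3
      = ((Equiv.swap b c * Equiv.swap a b)⁻¹) ^ 3 := by rw [hinv]
    _ = ((Equiv.swap b c * Equiv.swap a b) ^ 3)⁻¹ := by rw [inv_pow]
    _ = 1 := by rw [h, inv_one]

end Perm

section Phi

variable (hn : 2 ≤ n)

lemma one_ne_zero' (hn : 2 ≤ n) : (1 : ZMod (n+1)) ≠ 0 := by
  have := castne (n := n) (a := 1) (b := 0) (by omega) (by omega) (by omega)
  simpa using this

lemma two_ne_zero' (hn : 2 ≤ n) : (2 : ZMod (n+1)) ≠ 0 := by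
  have := castne (n := n) (a := 2) (b := 0) (by omega) (by omega) (by omega)
  simpa using this

lemma liftable (hn : 2 ≤ n) :
    (affineA n).IsLiftable (fun i : ZMod (n+1) => Equiv.swap (i-1) i) := by
  intro i j
  have h10 := one_ne_zero' hn
  have h20 := two_ne_zero' hn
  by_cases hij : i = j
  · subst hij
    rw [M_apply, if_pos rfl, pow_one, Equiv.swap_mul_self]
  rw [M_apply, if_neg hij]
  by_cases hadj : i = j + 1 ∨ j = i + 1
  · rw [if_pos hadj]
    simp only []
    rcases hadj with h | h
    · subst h
      show (Equiv.swap (j + 1 - 1) (j+1) * Equiv.swap (j - 1) j) ^ 3 = 1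
      rw [show (j + 1 - 1) = j from by ring]
      exact three_cycle_aux (a := j - 1) (b := j) (c := j + 1)
        (by intro hc; exact h10 (by linear_combination - hc))
        (by intro hc; exact h10 (by linear_combination - hc))
        (by intro hc; exact h20 (by linear_combination - hc))
    · subst h
      show (Equiv.swap (i - 1) i * Equiv.swap (i + 1 - 1) (i+1)) ^ 3 = 1
      rw [show (i + 1 - 1) = i from by ring]
      exact three_cycle_aux' (a := i - 1) (b := i) (c := i + 1)
        (by intro hc; exact h10 (by linear_combination - hc))
        (by intro hc; exact h10 (by linear_combination - hc))
        (by intro hc; exact h20 (by linear_combination - hc))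
  · rw [if_neg hadj]
    simp only []
    push_neg at hadj
    obtain ⟨had1, had2⟩ := hadj
    have hc : Commute (Equiv.swap (i-1) i) (Equiv.swap (j-1) j) := by
      apply swap_commute
      · intro hc; exact hij (by linear_combination hc)
      · intro hc; exact had1 (by linear_combination hc)
      · intro hc; exact had2 (by linear_combination - hc)
      · exact hij
    calc (Equiv.swap (i-1) i * Equiv.swap (j-1) j) ^ 2
        = Equiv.swap (i-1) i * (Equiv.swap (j-1) j * Equiv.swap (i-1) i) *
          Equiv.swap (j-1) j := by rw [sq]; group
      _ = Equiv.swap (i-1) i * (Equiv.swap (i-1) i * Equiv.swap (j-1) j) *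
          Equiv.swap (j-1) j := by rw [hc.eq]
      _ = 1 := by
          rw [← mul_assoc, Equiv.swap_mul_self, one_mul, Equiv.swap_mul_self]

/-- The homomorphism to the symmetric group of `ZMod (n+1)`. -/
noncomputable def φ (n : ℕ) (hn : 2 ≤ n) :
    (affineA n).Group →* Equiv.Perm (ZMod (n+1)) :=
  (cs n).lift ⟨fun i : ZMod (n+1) => Equiv.swap (i-1) i, liftable hn⟩

lemma φ_aa (i : ZMod (n+1)) : φ n hn (aa n i) = Equiv.swap (i-1) i := by
  rw [← cs_simple]
  exact (cs n).lift_apply_simple (liftable hn) i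

/-- `sP k` is the image of `ag k`. -/
def sP (n k : ℕ) : Equiv.Perm (ZMod (n+1)) :=
  Equiv.swap ((k : ZMod (n+1)) - 1) (k : ZMod (n+1))

lemma φ_ag (k : ℕ) : φ n hn (ag n k) = sP n k := φ_aa hn _

end Phi

/-! ### Descending words and ascending permutations -/

/-- `DescG j t = a_t a_{t-1} ⋯ a_{j+1}`. -/
def DescG (n j t : ℕ) : (affineA n).Group :=
  (((List.range' (j+1) (t-j)).map (ag n)).reverse).prod

/-- `AscP j t = s_{j+1} s_{j+2} ⋯ s_t` as a permutation. -/
def AscP (n j t : ℕ) : Equiv.Perm (ZMod (n+1)) :=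
  ((List.range' (j+1) (t-j)).map (sP n)).prod

lemma sP_inv (k : ℕ) : (sP n k)⁻¹ = sP n k := Equiv.swap_inv _ _

lemma φ_Desc (hn : 2 ≤ n) (j t : ℕ) : φ n hn (DescG n j t) = (AscP n j t)⁻¹ := by
  rw [DescG, AscP, map_list_prod, List.prod_inv_reverse]
  congr 1
  simp only [← List.map_reverse, List.map_map]
  apply List.map_congr_left
  intro k _
  simp only [Function.comp_apply, φ_ag hn, sP_inv]

lemma comm_desc {i j t : ℕ} (h : ∀ k, j+1 ≤ k → k ≤ t → Commute (ag n i) (ag n k)) :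
    Commute (ag n i) (DescG n j t) := by
  apply Commute.list_prod_right
  intro x hx
  rw [List.mem_reverse, List.mem_map] at hx
  obtain ⟨k, hk, rfl⟩ := hx
  rw [List.mem_range'_1] at hk
  exact h k hk.1 (by omega)

lemma DescG_cons {j t : ℕ} (h : j < t) :
    DescG n j t = DescG n (j+1) t * ag n (j+1) := by
  rw [DescG, DescG, show t - j = (t - (j+1)) + 1 from by omega, List.range'_succ]
  rw [List.map_cons, List.reverse_cons, List.prod_append, List.prod_cons, List.prod_nil,
    mul_one]

lemma AscP_cons {j t : ℕ} (h : j < t) :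
    AscP n j t = sP n (j+1) * AscP n (j+1) t := by
  rw [AscP, AscP, show t - j = (t - (j+1)) + 1 from by omega, List.range'_succ]
  rw [List.map_cons, List.prod_cons]

lemma prod_apply_fix {α : Type*} (l : List (Equiv.Perm α)) (x : α)
    (h : ∀ f ∈ l, f x = x) : l.prod x = x := by
  induction l with
  | nil => rfl
  | cons f l ih =>
    rw [List.prod_cons, Equiv.Perm.mul_apply, ih (fun g hg => h g (List.mem_cons_of_mem f hg)),
      h f List.mem_cons_self]

lemma sP_fix {k : ℕ} {x : ZMod (n+1)} (h1 : x ≠ (k : ZMod (n+1)) - 1) (h2 : x ≠ k) :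
    sP n k x = x := Equiv.swap_apply_of_ne_of_ne h1 h2

lemma AscP_fix {j t : ℕ} (ht : t ≤ n) {x : ZMod (n+1)} (hx : t < x.val) :
    AscP n j t x = x := by
  apply prod_apply_fix
  intro f hf
  rw [List.mem_map] at hf
  obtain ⟨k, hk, rfl⟩ := hf
  rw [List.mem_range'_1] at hk
  have hk1 : 1 ≤ k := by omega
  have hkt : k ≤ t := by omega
  apply sP_fix
  · rw [← cast_pred hk1]
    intro hc
    have : x.val = k - 1 := by rw [hc, ZMod.val_cast_of_lt (by omega)]
    omega
  · intro hc
    have : x.val = k := by rw [hc, ZMod.val_cast_of_lt (by omega)]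
    omega

lemma AscP_top : ∀ (d j : ℕ), j + d ≤ n →
    AscP n j (j+d) ((j+d : ℕ) : ZMod (n+1)) = (j : ZMod (n+1)) := by
  intro d
  induction d with
  | zero => intro j _; simp [AscP, Nat.sub_self]
  | succ d ih =>
    intro j hj
    rw [show j + (d+1) = (j+1) + d from by omega]
    rw [AscP_cons (by omega), Equiv.Perm.mul_apply, ih (j+1) (by omega)]
    rw [sP, show ((j+1 : ℕ) : ZMod (n+1)) - 1 = ((j : ℕ) : ZMod (n+1)) from by
      rw [← cast_pred (by omega : 1 ≤ j+1)]; norm_num]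
    exact Equiv.swap_apply_right _ _

/-! ### The commuting-past-descending-word identity -/

lemma range'_two (s : ℕ) : List.range' s 2 = [s, s+1] := by
  rw [List.range'_succ, List.range'_succ]
  rfl

lemma DescG_split {i j t : ℕ} (h1 : j + 2 ≤ i) (h2 : i ≤ t) :
    DescG n j t = DescG n i t * (ag n i * ag n (i-1)) * DescG n j (i-2) := by
  have hl : List.range' (j+1) ((i-2)-j) ++ List.range' (i-1) 2 ++ List.range' (i+1) (t-i)
      = List.range' (j+1) (t-j) := by
    rw [show (i-1) = (j+1) + 1 * ((i-2)-j) from by omega, List.range'_append,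
      show (i+1) = (j+1) + 1 * (((i-2)-j) + 2) from by omega, List.range'_append,
      show ((((i-2)-j) + 2) + (t-i)) = t - j from by omega]
  rw [DescG, ← hl, List.map_append, List.map_append, List.reverse_append,
    List.reverse_append, List.prod_append, List.prod_append]
  have hmid : ((List.range' (i-1) 2).map (ag n)).reverse.prod = ag n i * ag n (i-1) := by
    rw [range'_two, show (i-1) + 1 = i from by omega]
    simp
  rw [hmid, DescG, DescG]
  group

lemma gid {i j t : ℕ} (h1 : j + 2 ≤ i) (h2 : i ≤ t) (h3 : t ≤ n) :
    DescG n j t * ag n i = ag n (i-1) * DescG n j t := by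
  have hsplit := DescG_split (n := n) h1 h2
  have c1 : Commute (ag n i) (DescG n j (i-2)) :=
    comm_desc (fun k hk1 hk2 => (comm_ag (by omega) (by omega) (by omega)).symm)
  have c2 : Commute (ag n (i-1)) (DescG n i t) :=
    comm_desc (fun k hk1 hk2 => comm_ag (by omega) (by omega) (by omega))
  calc DescG n j t * ag n i
      = DescG n i t * (ag n i * ag n (i-1)) * (DescG n j (i-2) * ag n i) := by
        rw [hsplit]; group
    _ = DescG n i t * (ag n i * ag n (i-1)) * (ag n i * DescG n j (i-2)) := by rw [c1.eq]
    _ = DescG n i t * (ag n i * ag n (i-1) * ag n i) * DescG n j (i-2) := by group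
    _ = DescG n i t * (ag n (i-1) * ag n i * ag n (i-1)) * DescG n j (i-2) := by
        rw [braid_ag (by omega) (by omega)]
    _ = (DescG n i t * ag n (i-1)) * (ag n i * (ag n (i-1) * DescG n j (i-2))) := by group
    _ = (ag n (i-1) * DescG n i t) * (ag n i * (ag n (i-1) * DescG n j (i-2))) := by
        rw [c2.eq]
    _ = ag n (i-1) * (DescG n i t * (ag n i * ag n (i-1)) * DescG n j (i-2)) := by group
    _ = ag n (i-1) * DescG n j t := by rw [← hsplit]

/-! ### Perm-side corollaries -/

lemma comm_asc (hn : 2 ≤ n) {i j t : ℕ}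
    (h : ∀ k, j+1 ≤ k → k ≤ t → Commute (ag n i) (ag n k)) :
    Commute (sP n i) (AscP n j t) := by
  have hg : Commute (ag n i) (DescG n j t) := comm_desc h
  have h2 : Commute (sP n i) (AscP n j t)⁻¹ := by
    rw [← φ_Desc hn, ← φ_ag hn]
    exact hg.map (φ n hn)
  have := h2.inv_right
  rwa [inv_inv] at this

lemma sP_gid (hn : 2 ≤ n) {i j t : ℕ} (h1 : j + 2 ≤ i) (h2 : i ≤ t) (h3 : t ≤ n) :
    sP n i * AscP n j t = AscP n j t * sP n (i-1) := by
  have hg := congrArg (φ n hn) (gid (n := n) h1 h2 h3)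
  rw [map_mul, map_mul, φ_Desc hn, φ_ag hn, φ_ag hn] at hg
  have h4 : sP n i = AscP n j t * sP n (i-1) * (AscP n j t)⁻¹ := by
    rw [mul_assoc, ← hg]; group
  rw [h4]; group

/-! ### The canonical form `cw` -/

lemma val_cast_back (x : ZMod (n+1)) : ((x.val : ℕ) : ZMod (n+1)) = x :=
  ZMod.natCast_rightInverse x

lemma sP_mul_self (k : ℕ) : sP n k * sP n k = 1 := Equiv.swap_mul_self _ _

lemma AscP_self (j : ℕ) : AscP n j j = 1 := by simp [AscP, Nat.sub_self]

lemma DescG_self (j : ℕ) : DescG n j j = 1 := by simp [DescG, Nat.sub_self]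

/-- position (value) of `m` under `σ⁻¹`. -/
def jpos (n m : ℕ) (σ : Equiv.Perm (ZMod (n+1))) : ℕ := (σ⁻¹ ((m : ℕ) : ZMod (n+1))).val

/-- canonical word of a permutation, built level by level. -/
def cw (n : ℕ) : ℕ → Equiv.Perm (ZMod (n+1)) → (affineA n).Group
  | 0, _ => 1
  | (m+1), σ => cw n m (σ * AscP n (jpos n (m+1) σ) (m+1)) * DescG n (jpos n (m+1) σ) (m+1)

/-- `σ` fixes everything of value `> m`. -/
def lev (n m : ℕ) (σ : Equiv.Perm (ZMod (n+1))) : Prop :=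
  ∀ x : ZMod (n+1), m < x.val → σ x = x

lemma jpos_one {m : ℕ} (hm : m ≤ n) : jpos n m 1 = m := by
  rw [jpos, inv_one, Equiv.Perm.one_apply, ZMod.val_cast_of_lt (by omega)]

lemma cw_one : ∀ m, m ≤ n → cw n m (1 : Equiv.Perm (ZMod (n+1))) = 1 := by
  intro m
  induction m with
  | zero => intro _; rfl
  | succ m ih =>
    intro hm
    rw [cw, jpos_one hm, AscP_self, DescG_self, mul_one, mul_one, ih (by omega)]

lemma AscP_top' {j t : ℕ} (hj : j ≤ t) (ht : t ≤ n) :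
    AscP n j t ((t : ℕ) : ZMod (n+1)) = ((j : ℕ) : ZMod (n+1)) := by
  rw [show t = j + (t - j) from by omega]
  exact AscP_top (t - j) j (by omega)

lemma jpos_le {m : ℕ} (hm : m ≤ n) {σ : Equiv.Perm (ZMod (n+1))} (hσ : lev n m σ) :
    jpos n m σ ≤ m := by
  by_contra hc
  push_neg at hc
  have h1 : σ (σ⁻¹ ((m : ℕ) : ZMod (n+1))) = σ⁻¹ ((m : ℕ) : ZMod (n+1)) := hσ _ hc
  rw [← Equiv.Perm.mul_apply, mul_inv_cancel, Equiv.Perm.one_apply] at h1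
  have := congrArg ZMod.val h1
  rw [ZMod.val_cast_of_lt (by omega)] at this
  rw [jpos] at hc
  omega

lemma jpos_mul {m i : ℕ} (σ : Equiv.Perm (ZMod (n+1))) :
    jpos n m (σ * sP n i) = (sP n i ((jpos n m σ : ℕ) : ZMod (n+1))).val := by
  rw [jpos, jpos, mul_inv_rev, Equiv.Perm.mul_apply, sP_inv, val_cast_back]

lemma lev_mul_asc {m : ℕ} (hm : m + 1 ≤ n) {σ : Equiv.Perm (ZMod (n+1))}
    (hσ : lev n (m+1) σ) : lev n m (σ * AscP n (jpos n (m+1) σ) (m+1)) := by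
  have hj := jpos_le hm hσ
  intro x hx
  rw [Equiv.Perm.mul_apply]
  rcases Nat.lt_or_ge (m+1) x.val with h | h
  · rw [AscP_fix hm h, hσ x h]
  · have hxval : x.val = m + 1 := by omega
    have hxeq : x = ((m+1 : ℕ) : ZMod (n+1)) := by
      rw [← hxval, val_cast_back]
    rw [hxeq, AscP_top' hj hm, jpos, val_cast_back, ← Equiv.Perm.mul_apply, mul_inv_cancel, Equiv.Perm.one_apply]

lemma lev_mul_sP {m i : ℕ} (h1 : 1 ≤ i) (h2 : i ≤ m) (hm : m ≤ n)
    {σ : Equiv.Perm (ZMod (n+1))} (hσ : lev n m σ) : lev n m (σ * sP n i) := by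
  intro x hx
  rw [Equiv.Perm.mul_apply]
  have hfix : sP n i x = x := by
    apply sP_fix
    · rw [← cast_pred h1]
      intro hc
      have := congrArg ZMod.val hc
      rw [ZMod.val_cast_of_lt (by omega : i - 1 < n + 1)] at this
      omega
    · intro hc
      have := congrArg ZMod.val hc
      rw [ZMod.val_cast_of_lt (by omega : i < n + 1)] at this
      omega
  rw [hfix, hσ x hx]

/-! ### The key exchange lemma -/

lemma key (hn : 2 ≤ n) : ∀ m, m ≤ n → ∀ σ : Equiv.Perm (ZMod (n+1)), lev n m σ →
    ∀ i, 1 ≤ i → i ≤ m → cw n m σ * ag n i = cw n m (σ * sP n i) := by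
  intro m
  induction m with
  | zero => intro _ σ _ i h1 h2; omega
  | succ m ih =>
    intro hm σ hσ i h1 h2
    set j := jpos n (m+1) σ with hjdef
    have hj : j ≤ m + 1 := jpos_le hm hσ
    have hjn : j ≤ n := by omega
    have hlev' : lev n m (σ * AscP n j (m+1)) := lev_mul_asc hm hσ
    have hcw : cw n (m+1) σ = cw n m (σ * AscP n j (m+1)) * DescG n j (m+1) := rfl
    rcases Nat.lt_or_ge i j with hij | hij
    · -- Case A :  i < j
      have hcomm : ∀ k, j+1 ≤ k → k ≤ m+1 → Commute (ag n i) (ag n k) :=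
        fun k hk1 hk2 => comm_ag h1 (by omega) (by omega)
      have hcg : Commute (ag n i) (DescG n j (m+1)) := comm_desc hcomm
      have hca : Commute (sP n i) (AscP n j (m+1)) := comm_asc hn hcomm
      have hfix : sP n i ((j:ℕ) : ZMod (n+1)) = ((j:ℕ) : ZMod (n+1)) := by
        apply sP_fix
        · rw [← cast_pred h1]; exact castne (by omega) (by omega) (by omega)
        · exact castne (by omega) (by omega) (by omega)
      have hj' : jpos n (m+1) (σ * sP n i) = j := by
        rw [jpos_mul σ, ← hjdef, hfix, ZMod.val_cast_of_lt (by omega)]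
      have hrhs : cw n (m+1) (σ * sP n i)
          = cw n m (σ * sP n i * AscP n j (m+1)) * DescG n j (m+1) := by
        show cw n m (σ * sP n i * AscP n (jpos n (m+1) (σ * sP n i)) (m+1)) *
          DescG n (jpos n (m+1) (σ * sP n i)) (m+1) = _
        rw [hj']
      rw [hcw, hrhs, mul_assoc, ← hcg.eq, ← mul_assoc,
        ih (by omega) _ hlev' i h1 (by omega),
        show σ * AscP n j (m+1) * sP n i = σ * sP n i * AscP n j (m+1) from by
          rw [mul_assoc, ← hca.eq, mul_assoc]]
    · by_cases hij2 : i = j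
      · -- Case B : i = j
        subst hij2
        have hfix : sP n j ((j:ℕ) : ZMod (n+1)) = ((j-1 : ℕ) : ZMod (n+1)) := by
          rw [cast_pred h1]
          exact Equiv.swap_apply_right _ _
        have hj' : jpos n (m+1) (σ * sP n j) = j - 1 := by
          rw [jpos_mul σ, ← hjdef, hfix, ZMod.val_cast_of_lt (by omega)]
        have hrhs : cw n (m+1) (σ * sP n j)
            = cw n m (σ * sP n j * AscP n (j-1) (m+1)) * DescG n (j-1) (m+1) := by
          show cw n m (σ * sP n j * AscP n (jpos n (m+1) (σ * sP n j)) (m+1)) *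
            DescG n (jpos n (m+1) (σ * sP n j)) (m+1) = _
          rw [hj']
        have e1 : (j-1) + 1 = j := by omega
        have hasc : AscP n (j-1) (m+1) = sP n j * AscP n j (m+1) := by
          rw [AscP_cons (by omega), e1]
        have hdesc : DescG n (j-1) (m+1) = DescG n j (m+1) * ag n j := by
          rw [DescG_cons (by omega), e1]
        rw [hcw, hrhs, hasc, hdesc,
          show σ * sP n j * (sP n j * AscP n j (m+1))
              = σ * (sP n j * sP n j) * AscP n j (m+1) from by group,
          sP_mul_self, mul_one, mul_assoc]
      · by_cases hij3 : i = j + 1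
        · -- Case C : i = j + 1
          subst hij3
          have hc1 : ((j+1 : ℕ) : ZMod (n+1)) - 1 = ((j : ℕ) : ZMod (n+1)) := by
            rw [← cast_pred (by omega : 1 ≤ j+1)]; norm_num
          have hfix : sP n (j+1) ((j:ℕ) : ZMod (n+1)) = ((j+1 : ℕ) : ZMod (n+1)) := by
            rw [sP, hc1]
            exact Equiv.swap_apply_left _ _
          have hj' : jpos n (m+1) (σ * sP n (j+1)) = j + 1 := by
            rw [jpos_mul σ, ← hjdef, hfix, ZMod.val_cast_of_lt (by omega)]
          have hrhs : cw n (m+1) (σ * sP n (j+1))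
              = cw n m (σ * sP n (j+1) * AscP n (j+1) (m+1)) * DescG n (j+1) (m+1) := by
            show cw n m (σ * sP n (j+1) * AscP n (jpos n (m+1) (σ * sP n (j+1))) (m+1)) *
              DescG n (jpos n (m+1) (σ * sP n (j+1))) (m+1) = _
            rw [hj']
          have hasc : AscP n j (m+1) = sP n (j+1) * AscP n (j+1) (m+1) :=
            AscP_cons (by omega)
          have hdesc : DescG n j (m+1) = DescG n (j+1) (m+1) * ag n (j+1) :=
            DescG_cons (by omega)
          rw [hcw, hrhs, hasc, hdesc,
            show cw n m (σ * (sP n (j+1) * AscP n (j+1) (m+1))) *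
                (DescG n (j+1) (m+1) * ag n (j+1)) * ag n (j+1)
              = cw n m (σ * (sP n (j+1) * AscP n (j+1) (m+1))) *
                DescG n (j+1) (m+1) * (ag n (j+1) * ag n (j+1)) from by group,
            ag_mul_self, mul_one, ← mul_assoc]
        · -- Case D : j + 2 ≤ i
          have hij4 : j + 2 ≤ i := by omega
          have hfix : sP n i ((j:ℕ) : ZMod (n+1)) = ((j:ℕ) : ZMod (n+1)) := by
            apply sP_fix
            · rw [← cast_pred h1]; exact castne (by omega) (by omega) (by omega)
            · exact castne (by omega) (by omega) (by omega)
          have hj' : jpos n (m+1) (σ * sP n i) = j := by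
            rw [jpos_mul σ, ← hjdef, hfix, ZMod.val_cast_of_lt (by omega)]
          have hrhs : cw n (m+1) (σ * sP n i)
              = cw n m (σ * sP n i * AscP n j (m+1)) * DescG n j (m+1) := by
            show cw n m (σ * sP n i * AscP n (jpos n (m+1) (σ * sP n i)) (m+1)) *
              DescG n (jpos n (m+1) (σ * sP n i)) (m+1) = _
            rw [hj']
          have hgid : DescG n j (m+1) * ag n i = ag n (i-1) * DescG n j (m+1) :=
            gid hij4 h2 hm
          have hsgid : sP n i * AscP n j (m+1) = AscP n j (m+1) * sP n (i-1) :=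
            sP_gid hn hij4 h2 hm
          rw [hcw, hrhs, mul_assoc, hgid, ← mul_assoc,
            ih (by omega) _ hlev' (i-1) (by omega) (by omega),
            show σ * AscP n j (m+1) * sP n (i-1) = σ * sP n i * AscP n j (m+1) from by
              rw [mul_assoc, ← hsgid, mul_assoc]]

/-! ### The image of the cyclic products -/

/-- the rotation `x ↦ x + 1`. -/
def rot (n : ℕ) : Equiv.Perm (ZMod (n+1)) := Equiv.addRight 1

lemma rot_apply (x : ZMod (n+1)) : rot n x = x + 1 := rfl

/-- partial products of adjacent swaps. -/
def Lperm (n m : ℕ) : Equiv.Perm (ZMod (n+1)) :=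
  ((List.range m).map fun k => Equiv.swap ((k : ℕ) : ZMod (n+1)) ((k+1 : ℕ) : ZMod (n+1))).prod

lemma Lperm_val : ∀ m, m ≤ n → ∀ x : ZMod (n+1),
    Lperm n m x = if x.val < m then x + 1 else if x.val = m then 0 else x := by
  intro m
  induction m with
  | zero =>
    intro _ x
    simp only [Lperm, List.range_zero, List.map_nil, List.prod_nil, Equiv.Perm.one_apply]
    rw [if_neg (by omega)]
    by_cases h : x = 0
    · subst h
      rw [if_pos (by simp [ZMod.val_zero])]
    · rw [if_neg (fun hc => h (by rw [← val_cast_back x, hc]; norm_num))]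
  | succ m ih =>
    intro hm x
    have hL : Lperm n (m+1) = Lperm n m *
        Equiv.swap ((m : ℕ) : ZMod (n+1)) ((m+1 : ℕ) : ZMod (n+1)) := by
      rw [Lperm, Lperm, List.range_succ, List.map_append, List.prod_append]
      simp
    rw [hL, Equiv.Perm.mul_apply]
    by_cases hxm : x = ((m : ℕ) : ZMod (n+1))
    · subst hxm
      rw [Equiv.swap_apply_left, ih (by omega) _]
      rw [ZMod.val_cast_of_lt (show m < n+1 by omega), ZMod.val_cast_of_lt (show m+1 < n+1 by omega)]
      rw [if_neg (by omega), if_neg (by omega), if_pos (by omega)]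
      try push_cast
      try ring
    by_cases hxm1 : x = ((m+1 : ℕ) : ZMod (n+1))
    · subst hxm1
      rw [Equiv.swap_apply_right, ih (by omega) _]
      rw [ZMod.val_cast_of_lt (show m < n+1 by omega), ZMod.val_cast_of_lt (show m+1 < n+1 by omega)]
      rw [if_neg (by omega), if_pos rfl, if_neg (by omega), if_pos rfl]
      try norm_num
    · rw [Equiv.swap_apply_of_ne_of_ne hxm hxm1, ih (by omega) x]
      have hvm : x.val ≠ m := fun hc => hxm (by rw [← val_cast_back x, hc])
      have hvm1 : x.val ≠ m + 1 := fun hc => hxm1 (by rw [← val_cast_back x, hc])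
      rcases Nat.lt_or_ge x.val m with h | h
      · rw [if_pos h, if_pos (by omega)]
      · rw [if_neg (by omega), if_neg (by omega), if_neg (by omega), if_neg (by omega)]

lemma Lperm_top : Lperm n n = rot n := by
  apply Equiv.ext
  intro x
  rw [Lperm_val n le_rfl x, rot_apply]
  have hx : x.val < n + 1 := ZMod.val_lt x
  rcases Nat.lt_or_ge x.val n with h | h
  · rw [if_pos h]
  · have hxn : x.val = n := by omega
    rw [if_neg (by omega), if_pos hxn]
    have : x = ((n : ℕ) : ZMod (n+1)) := by rw [← val_cast_back x, hxn]
    rw [this, show ((n : ℕ) : ZMod (n+1)) + 1 = (((n+1 : ℕ)) : ZMod (n+1)) from by push_cast; ring,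
      ZMod.natCast_self]

lemma phi_pp_zero (hn : 2 ≤ n) : φ n hn (pp n 0) = rot n := by
  rw [← Lperm_top, pp, map_list_prod, List.map_map, Lperm]
  congr 1
  apply List.map_congr_left
  intro k hk
  rw [List.mem_range] at hk
  have h1 : (0 : ZMod (n+1)) + 1 + (k : ℕ) = ((k+1 : ℕ) : ZMod (n+1)) := by push_cast; ring
  simp only [Function.comp_apply]
  rw [h1, φ_aa hn, show ((k+1 : ℕ) : ZMod (n+1)) - 1 = ((k : ℕ) : ZMod (n+1)) from by
    rw [← cast_pred (by omega : 1 ≤ k+1)]; norm_num]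

lemma pp_rec (j : ZMod (n+1)) : aa n (j+1) * pp n (j+1) = pp n j * aa n j := by
  have key : ∀ x : ZMod (n+1),
      (List.range (n+1)).map (fun k => aa n (x + 1 + (k : ℕ))) =
      aa n (x+1) :: (List.range n).map (fun k => aa n (x + 1 + 1 + (k : ℕ))) := by
    intro x
    rw [List.range_succ_eq_map, List.map_cons, List.map_map]
    congr 1
    · norm_num
    · apply List.map_congr_left
      intro k _
      simp only [Function.comp_apply, Nat.succ_eq_add_one]
      congr 1
      push_cast
      ring
  have key2 : ∀ x : ZMod (n+1),
      ((List.range (n+1)).map (fun k => aa n (x + 1 + (k : ℕ)))).prod =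
      ((List.range n).map (fun k => aa n (x + 1 + (k : ℕ)))).prod * aa n x := by
    intro x
    rw [List.range_succ, List.map_append, List.prod_append, List.map_singleton,
      List.prod_singleton]
    congr 1
    rw [show x + 1 + ((n : ℕ) : ZMod (n+1)) = x + (1 + ((n:ℕ) : ZMod (n+1))) from by ring,
      show (1 : ZMod (n+1)) + ((n:ℕ) : ZMod (n+1)) = (((n+1 : ℕ)) : ZMod (n+1)) from by
        push_cast; ring, ZMod.natCast_self, add_zero]
  calc aa n (j+1) * pp n (j+1)
      = ((List.range (n+1)).map (fun k => aa n (j + 1 + (k : ℕ)))).prod := by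
        rw [key j, List.prod_cons, pp]
    _ = pp n j * aa n j := by rw [key2 j, pp]

lemma rot_conj (j : ZMod (n+1)) :
    Equiv.swap j (j+1) * rot n * Equiv.swap (j-1) j = rot n := by
  apply Equiv.ext
  intro x
  simp only [Equiv.Perm.mul_apply]
  by_cases hx1 : x = j - 1
  · rw [hx1, Equiv.swap_apply_left, rot_apply, rot_apply, Equiv.swap_apply_right]
    ring
  by_cases hx2 : x = j
  · rw [hx2, Equiv.swap_apply_right, rot_apply, rot_apply, show j - 1 + 1 = j from by ring,
      Equiv.swap_apply_left]
  · rw [Equiv.swap_apply_of_ne_of_ne hx1 hx2, rot_apply,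
      Equiv.swap_apply_of_ne_of_ne (fun hc => hx1 (by linear_combination hc))
        (fun hc => hx2 (by linear_combination hc))]

lemma phi_pp (hn : 2 ≤ n) (j : ZMod (n+1)) : φ n hn (pp n j) = rot n := by
  have hnat : ∀ m : ℕ, φ n hn (pp n ((m : ℕ) : ZMod (n+1))) = rot n := by
    intro m
    induction m with
    | zero => rw [show (((0:ℕ)) : ZMod (n+1)) = 0 from by norm_num]; exact phi_pp_zero hn
    | succ m ih =>
      have hrec := congrArg (φ n hn) (pp_rec (n := n) ((m : ℕ) : ZMod (n+1)))
      rw [map_mul, map_mul, φ_aa hn, φ_aa hn, ih] at hrec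
      have : φ n hn (pp n (((m:ℕ) : ZMod (n+1)) + 1)) =
          (Equiv.swap (((m:ℕ) : ZMod (n+1)) + 1 - 1) (((m:ℕ) : ZMod (n+1)) + 1))⁻¹ *
          (rot n * Equiv.swap (((m:ℕ) : ZMod (n+1)) - 1) ((m:ℕ) : ZMod (n+1))) := by
        rw [← hrec]; group
      rw [show ((m+1 : ℕ) : ZMod (n+1)) = ((m:ℕ) : ZMod (n+1)) + 1 from by push_cast; ring, this,
        Equiv.swap_inv, show ((m:ℕ) : ZMod (n+1)) + 1 - 1 = ((m:ℕ) : ZMod (n+1)) from by ring,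
        ← mul_assoc]
      exact rot_conj _
  rw [← val_cast_back j]
  exact hnat j.val

lemma NN_le_ker (hn : 2 ≤ n) : NN n ≤ (φ n hn).ker := by
  rw [NN]
  apply Subgroup.closure_le _ |>.mpr
  intro x hx
  obtain ⟨i, j, rfl⟩ := hx
  rw [SetLike.mem_coe, MonoidHom.mem_ker, map_mul, map_inv, phi_pp hn, phi_pp hn,
    inv_mul_cancel]

/-! ### Final assembly -/

lemma lev_top (σ : Equiv.Perm (ZMod (n+1))) : lev n n σ := by
  intro x hx
  exact absurd (ZMod.val_lt x) (by omega)

lemma list_cw (hn : 2 ≤ n) (l : List (affineA n).Group)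
    (hl : ∀ y ∈ l, y ∈ ({x | ∃ i : ZMod (n + 1), i ≠ 0 ∧ x = aa n i} ∪
      {x | ∃ i : ZMod (n + 1), i ≠ 0 ∧ x = aa n i}⁻¹ : Set (affineA n).Group)) :
    l.prod = cw n n (φ n hn l.prod) := by
  induction l using List.reverseRecOn with
  | nil =>
    rw [List.prod_nil, map_one, cw_one n le_rfl]
  | append_singleton l y ih =>
    have hy : y ∈ _ := hl y (by simp)
    have hy' : ∃ i : ZMod (n+1), i ≠ 0 ∧ y = aa n i := by
      rcases hy with h | h
      · exact h
      · obtain ⟨i, hi, hyi⟩ := h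
        exact ⟨i, hi, by rw [← aa_inv i, ← hyi, inv_inv]⟩
    obtain ⟨i, hi0, rfl⟩ := hy'
    have hl' : ∀ y ∈ l, y ∈ _ := fun y hy => hl y (by simp [hy])
    have hval1 : 1 ≤ i.val := by
      rcases Nat.eq_or_lt_of_le (Nat.zero_le i.val) with h | h
      · exact absurd ((ZMod.val_eq_zero i).mp h.symm) hi0
      · omega
    have hvaln : i.val ≤ n := by have := ZMod.val_lt i; omega
    have hag : aa n i = ag n i.val := by rw [ag, val_cast_back]
    rw [List.prod_append, List.prod_singleton]
    calc l.prod * aa n i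
        = cw n n (φ n hn l.prod) * ag n i.val := by rw [← ih hl', ← hag]
      _ = cw n n (φ n hn l.prod * sP n i.val) :=
          key hn n le_rfl _ (lev_top _) i.val hval1 hvaln
      _ = cw n n (φ n hn (l.prod * aa n i)) := by rw [map_mul, hag, φ_ag hn]

lemma parab_cw (hn : 2 ≤ n) {x : (affineA n).Group} (hx : x ∈ parab n) :
    x = cw n n (φ n hn x) := by
  have hx' : x ∈ Submonoid.closure
      ({x | ∃ i : ZMod (n + 1), i ≠ 0 ∧ x = aa n i} ∪
       {x | ∃ i : ZMod (n + 1), i ≠ 0 ∧ x = aa n i}⁻¹) := by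
    rw [← Subgroup.closure_toSubmonoid]
    exact hx
  obtain ⟨l, hl, rfl⟩ := Submonoid.exists_list_of_mem_closure hx'
  exact list_cw hn l hl

end Stmt15

/-- In `Ãₙ`, the parabolic subgroup `⟨a₁,…,aₙ⟩` intersects `N = ⟨pⱼ⁻¹pᵢ⟩` trivially. -/
theorem stmt15 (n : ℕ) (hn : 2 ≤ n) :
    parab n ⊓ NN n = ⊥ := by
  rw [eq_bot_iff]
  intro x hx
  obtain ⟨hp, hN⟩ := hx
  have h1 : Stmt15.φ n hn x = 1 := Stmt15.NN_le_ker hn hN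
  have h2 := Stmt15.parab_cw hn hp
  rw [h1, Stmt15.cw_one n le_rfl] at h2
  simpa using h2
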